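/- If x ∈ ∂Ĥ^{2,n} and y ∈ Ĥ^{2,n}, then x and y are joined by a spacelike geodesic inside Ĥ^{2,n} ∪ ∂Ĥ^{2,n} if and only if ⟨x,y⟩ < 0, and by a lightlike geodesic if and only if ⟨x,y⟩ = 0. -/

import Mathlib

/-- The signature `(2, n+1)` bilinear form on `ℝ^{n+3}`. -/
noncomputable def bform (n : ℕ) (x y : Fin (n + 3) → ℝ) : ℝ :=
  ∑ i : Fin (n + 3), (if (i : ℕ) < 2 then (1 : ℝ) else -1) * (x i * y i)

lemma bform_comm (n : ℕ) (x y : Fin (n + 3) → ℝ) : bform n x y = bform n y x := by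
  unfold bform; apply Finset.sum_congr rfl; intros; ring

lemma bform_add_left (n : ℕ) (x y z : Fin (n + 3) → ℝ) :
    bform n (x + y) z = bform n x z + bform n y z := by
  unfold bform; rw [← Finset.sum_add_distrib]
  apply Finset.sum_congr rfl; intros; simp only [Pi.add_apply]; split_ifs <;> ring

lemma bform_smul_left (n : ℕ) (s : ℝ) (x y : Fin (n + 3) → ℝ) :
    bform n (s • x) y = s * bform n x y := by
  unfold bform; rw [Finset.mul_sum]
  apply Finset.sum_congr rfl; intros; simp [Pi.smul_apply]; ring

lemma bform_add_right (n : ℕ) (x y z : Fin (n + 3) → ℝ) :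
    bform n x (y + z) = bform n x y + bform n x z := by
  rw [bform_comm, bform_add_left, bform_comm n y x, bform_comm n z x]

lemma bform_smul_right (n : ℕ) (s : ℝ) (x y : Fin (n + 3) → ℝ) :
    bform n x (s • y) = s * bform n x y := by
  rw [bform_comm, bform_smul_left, bform_comm]

/-- The boundary point `x` (an isotropic ray) and the hyperboloid point `y` are joined by a
spacelike geodesic inside `Ĥ^{2,n} ∪ ∂Ĥ^{2,n}`: `x` is (a positive multiple of) the endpoint
at infinity `y + v` of the spacelike geodesic ray `t ↦ cosh(t)y + sinh(t)v` from `y`. -/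
def JoinedSpacelikeInfty (n : ℕ) (x y : Fin (n + 3) → ℝ) : Prop :=
  ∃ v : Fin (n + 3) → ℝ, bform n v v = 1 ∧ bform n y v = 0 ∧
    ∃ s : ℝ, 0 < s ∧ x = s • (y + v)

/-- The boundary point `x` and the hyperboloid point `y` are joined by a lightlike geodesic
inside `Ĥ^{2,n} ∪ ∂Ĥ^{2,n}`: `x` is (a positive multiple of) the endpoint at infinity `v`
of the lightlike geodesic ray `t ↦ y + tv` from `y`. -/
def JoinedLightlikeInfty (n : ℕ) (x y : Fin (n + 3) → ℝ) : Prop :=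
  ∃ v : Fin (n + 3) → ℝ, bform n v v = 0 ∧ bform n y v = 0 ∧ v ≠ 0 ∧
    ∃ s : ℝ, 0 < s ∧ x = s • v

/-- If `x ∈ ∂Ĥ^{2,n}` and `y ∈ Ĥ^{2,n}`, then `x` and `y` are joined by a spacelike geodesic
inside `Ĥ^{2,n} ∪ ∂Ĥ^{2,n}` iff `⟨x,y⟩ < 0`, and by a lightlike geodesic iff `⟨x,y⟩ = 0`. -/
theorem stmt1 (n : ℕ) (x y : Fin (n + 3) → ℝ)
    (hx0 : bform n x x = 0) (hxne : x ≠ 0) (hy : bform n y y = -1) :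
    (JoinedSpacelikeInfty n x y ↔ bform n x y < 0) ∧
    (JoinedLightlikeInfty n x y ↔ bform n x y = 0) := by
  constructor
  · constructor
    · rintro ⟨v, hvv, hyv, s, hs, rfl⟩
      rw [bform_smul_left, bform_add_left, bform_comm n v y, hy, hyv]
      nlinarith
    · intro hc
      set c := bform n x y with hcdef
      refine ⟨(-c)⁻¹ • x + (-1 : ℝ) • y, ?_, ?_, -c, by linarith, ?_⟩
      · have hc0 : c ≠ 0 := by linarith
        simp only [bform_add_left, bform_add_right, bform_smul_left, bform_smul_right]
        rw [hx0, hy, bform_comm n y x, ← hcdef]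
        field_simp
        ring
      · have hc0 : c ≠ 0 := by linarith
        simp only [bform_add_right, bform_smul_right]
        rw [hy, bform_comm n y x, ← hcdef]
        field_simp
        ring
      · have hc0 : c ≠ 0 := by linarith
        ext i
        simp only [Pi.add_apply, Pi.smul_apply, smul_eq_mul]
        field_simp
        ring
  · constructor
    · rintro ⟨v, hvv, hyv, hvne, s, hs, rfl⟩
      rw [bform_smul_left, bform_comm n v y, hyv]
      ring_nf
    · intro hc
      exact ⟨x, hx0, by rw [bform_comm]; exact hc, hxne, 1, one_pos, (one_smul _ _).symm⟩
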